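/- Let U be any set of the form S_B(G) ∩ (⋃_{i∈I} C_i) ∩ (⋃_{j∈J} Ĉ_j) for arbitrary subsets I, J ⊆ [K], where Ĉ_j = {x : G(x) = j}. Then N*(U) \ U is contained in the complement of S_B(G): every within-class neighbor of U that lies outside U fails to be robustly labeled by G. -/
import Mathlib


open MeasureTheory Set ProbabilityTheory

noncomputable def pr {X : Type*} [MeasurableSpace X] (P : Measure X) (S : Set X) : ℝ :=
  (P S).toReal

def nbhd {X : Type*} (B : X → Set X) (S : Set X) : Set X :=
  {x' | ∃ x ∈ S, (B x ∩ B x').Nonempty}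

def cls {X : Type*} {K : ℕ} (Gstar : X → Fin K) (i : Fin K) : Set X := {x | Gstar x = i}

def nstar {X : Type*} {K : ℕ} (B : X → Set X) (Gstar : X → Fin K) (S : Set X) : Set X :=
  ⋃ i, nbhd B (S ∩ cls Gstar i) ∩ cls Gstar i

def robustSet {X : Type*} {K : ℕ} (B : X → Set X) (G : X → Fin K) : Set X :=
  {x | ∀ x' ∈ B x, G x' = G x}

def mset {X : Type*} {K : ℕ} (Gstar G : X → Fin K) : Set X := {x | G x ≠ Gstar x}

theorem stmt11 {X : Type*} {K : ℕ}
    (B : X → Set X) (hB : ∀ x, x ∈ B x)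
    (Gstar G : X → Fin K) (I J : Set (Fin K)) :
    nstar B Gstar (robustSet B G ∩ (⋃ i ∈ I, cls Gstar i) ∩ (⋃ j ∈ J, {x | G x = j}))
        \ (robustSet B G ∩ (⋃ i ∈ I, cls Gstar i) ∩ (⋃ j ∈ J, {x | G x = j}))
      ⊆ (robustSet B G)ᶜ := by
  rintro x' ⟨hmem, hnot⟩ hrob
  apply hnot
  simp only [nstar, mem_iUnion, mem_inter_iff] at hmem
  obtain ⟨i, ⟨x, ⟨⟨⟨hxrob, hxI⟩, hxJ⟩, hxcls⟩, hbx⟩, hcls⟩ := hmem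
  obtain ⟨y, hy1, hy2⟩ := hbx
  have hG : G x' = G x := by
    rw [← hrob y hy2, hxrob y hy1]
  refine ⟨⟨hrob, ?_⟩, ?_⟩
  · simp only [mem_iUnion] at hxI ⊢
    obtain ⟨i', hi', hx'⟩ := hxI
    exact ⟨i', hi', show Gstar x' = i' from hcls.trans (hxcls.symm.trans hx')⟩
  · simp only [mem_iUnion] at hxJ ⊢
    obtain ⟨j, hj, hx'⟩ := hxJ
    exact ⟨j, hj, show G x' = j from hG.trans hx'⟩
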